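/- Let λ ∈ ℂ be an eigenvalue of L = D(I-P) with eigenvector x, where P is row-stochastic and D = diag(d) with d(k) > 0. If k is an index with |x(k)| = max_j |x(j)|, then |1 - λ/d(k)| ≤ 1. -/

import Mathlib

open Matrix

theorem stmt2 (n : ℕ) (P : Matrix (Fin n) (Fin n) ℝ) (d : Fin n → ℝ)
    (hP0 : ∀ i j, 0 ≤ P i j) (hP1 : ∀ i, ∑ j, P i j = 1)
    (hd : ∀ i, 0 < d i)
    (lam : ℂ) (x : Fin n → ℂ) (hx : x ≠ 0)
    (heig : ((Matrix.diagonal d * (1 - P)).map (Complex.ofReal)).mulVec x = lam • x)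
    (k : Fin n) (hk : ∀ j, ‖x j‖ ≤ ‖x k‖) :
    ‖1 - lam / (d k : ℂ)‖ ≤ 1 := by
  have hxk : ‖x k‖ ≠ 0 := by
    intro h0
    apply hx
    funext j
    have := hk j
    rw [h0] at this
    have : ‖x j‖ = 0 := le_antisymm this (norm_nonneg _)
    simpa using this
  have hxkpos : 0 < ‖x k‖ := lt_of_le_of_ne (norm_nonneg _) (Ne.symm hxk)
  have hdk : (d k : ℂ) ≠ 0 := by
    exact_mod_cast (hd k).ne'
  -- row k of eigen equation
  have hrow := congrFun heig k
  simp only [Matrix.mulVec, dotProduct, Matrix.map_apply, Pi.smul_apply,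
    smul_eq_mul] at hrow
  have hentry : ∀ j, ((Matrix.diagonal d * (1 - P)) k j : ℝ) =
      d k * ((if k = j then (1:ℝ) else 0) - P k j) := by
    intro j
    rw [Matrix.diagonal_mul]
    simp [Matrix.sub_apply, Matrix.one_apply]
  have hrow2 : ∑ j, ((d k : ℂ) * (((if k = j then (1:ℝ) else 0) : ℝ) - (P k j : ℝ))) * x j
      = lam * x k := by
    rw [← hrow]
    apply Finset.sum_congr rfl
    intro j _
    rw [hentry j]
    push_cast
    ring
  have hsum : (d k : ℂ) * x k - (d k : ℂ) * ∑ j, (P k j : ℂ) * x j = lam * x k := by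
    rw [← hrow2]
    have hterm : ∀ j ∈ Finset.univ, ((d k : ℂ) * (((if k = j then (1:ℝ) else 0) : ℝ) - (P k j : ℝ))) * x j
        = (if k = j then (d k : ℂ) * x j else 0) - (d k : ℂ) * ((P k j : ℂ) * x j) := by
      intro j _
      by_cases h : k = j <;> simp [h] <;> ring
    rw [Finset.sum_congr rfl hterm, Finset.sum_sub_distrib, Finset.sum_ite_eq,
      Finset.mul_sum]
    simp
  have key : (1 - lam / (d k : ℂ)) * x k = ∑ j, (P k j : ℂ) * x j := by
    field_simp
    linear_combination hsum
  have habs : ‖1 - lam / (d k : ℂ)‖ * ‖x k‖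
      ≤ ‖x k‖ := by
    rw [← norm_mul, key]
    calc ‖∑ j, (P k j : ℂ) * x j‖
        ≤ ∑ j, ‖(P k j : ℂ) * x j‖ := norm_sum_le _ _
      _ = ∑ j, P k j * ‖x j‖ := by
          apply Finset.sum_congr rfl
          intro j _
          rw [norm_mul, Complex.norm_real, Real.norm_of_nonneg (hP0 k j)]
      _ ≤ ∑ j, P k j * ‖x k‖ := by
          apply Finset.sum_le_sum
          intro j _
          exact mul_le_mul_of_nonneg_left (hk j) (hP0 k j)
      _ = ‖x k‖ := by
          rw [← Finset.sum_mul, hP1 k, one_mul]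
  exact le_of_mul_le_mul_right (by simpa using habs) hxkpos
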